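/- Let M be a real symmetric n×n matrix, m ∈ ℝⁿ and r ∈ ℝ. Then xᵀMx + 2mᵀx + r ≥ 0 for all x ∈ ℝⁿ if and only if the (n+1)×(n+1) block matrix [[M, m], [mᵀ, r]] is positive semidefinite. -/

import Mathlib

open Matrix

lemma quad_coeff_nonneg (a b c : ℝ) (h : ∀ t : ℝ, a * t ^ 2 + b * t + c ≥ 0) :
    0 ≤ a := by
  by_contra ha
  push_neg at ha
  set t : ℝ := max 1 ((|b| + |c| + 1) / (-a)) with ht
  have ht1 : (1 : ℝ) ≤ t := le_max_left _ _
  have ht2 : (|b| + |c| + 1) / (-a) ≤ t := le_max_right _ _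
  have hna : (0 : ℝ) < -a := by linarith
  have hta : t * (-a) ≥ |b| + |c| + 1 := by
    calc |b| + |c| + 1 = ((|b| + |c| + 1) / (-a)) * (-a) := by
          rw [div_mul_cancel₀ _ hna.ne']
    _ ≤ t * (-a) := by nlinarith
  have hb : b * t ≤ |b| * t := by nlinarith [le_abs_self b]
  have hc : c ≤ |c| * t := by nlinarith [le_abs_self c, abs_nonneg c]
  have := h t
  nlinarith [abs_nonneg b, abs_nonneg c]

lemma form_eval (M : Matrix (Fin n) (Fin n) ℝ) (m : Fin n → ℝ) (r : ℝ)
    (y : (Fin n ⊕ Fin 1) → ℝ) :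
    y ⬝ᵥ (Matrix.fromBlocks M
        (Matrix.of fun i (_ : Fin 1) => m i)
        (Matrix.of fun (_ : Fin 1) j => m j)
        (Matrix.of fun (_ _ : Fin 1) => r)) *ᵥ y
    = (y ∘ Sum.inl) ⬝ᵥ M *ᵥ (y ∘ Sum.inl)
      + y (Sum.inr 0) * ((y ∘ Sum.inl) ⬝ᵥ m)
      + y (Sum.inr 0) * (m ⬝ᵥ (y ∘ Sum.inl))
      + y (Sum.inr 0) * y (Sum.inr 0) * r := by
  simp only [dotProduct, mulVec, Fintype.sum_sum_type, fromBlocks_apply₁₁,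
    fromBlocks_apply₁₂, fromBlocks_apply₂₁, fromBlocks_apply₂₂, of_apply,
    Finset.univ_unique, Fin.default_eq_zero, Finset.sum_singleton,
    Function.comp_apply]
  simp only [Finset.mul_sum, Finset.sum_mul, Finset.sum_add_distrib, add_mul, mul_add]
  ring_nf
  have h1 : ∀ x : Fin n, y (Sum.inl x) * m x * y (Sum.inr 0)
      = y (Sum.inr 0) * y (Sum.inl x) * m x := fun _ => by ring
  have h2 : ∀ x : Fin n, y (Sum.inr 0) * m x * y (Sum.inl x)
      = y (Sum.inr 0) * y (Sum.inl x) * m x := fun _ => by ring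
  simp only [h1, h2]

/-- A quadratic function `xᵀMx + 2mᵀx + r` is globally nonnegative if and only if the
bordered matrix `[[M, m], [mᵀ, r]]` is positive semidefinite. -/
theorem quadratic_nonneg_iff_bordered_psd (n : ℕ) (hn : 0 < n)
    (M : Matrix (Fin n) (Fin n) ℝ) (hM : M.IsSymm) (m : Fin n → ℝ) (r : ℝ) :
    (∀ x : Fin n → ℝ, x ⬝ᵥ M *ᵥ x + 2 * (m ⬝ᵥ x) + r ≥ 0) ↔
      (Matrix.fromBlocks M
        (Matrix.of fun i (_ : Fin 1) => m i)
        (Matrix.of fun (_ : Fin 1) j => m j)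
        (Matrix.of fun (_ _ : Fin 1) => r)).PosSemidef := by
  constructor
  · intro h
    rw [posSemidef_iff_dotProduct_mulVec]
    constructor
    · show _ = _
      rw [conjTranspose_eq_transpose_of_trivial, fromBlocks_transpose]
      rw [show Mᵀ = M from hM]
      congr 1 <;> ext i j <;> simp
    · intro y
      rw [star_trivial, form_eval]
      set x : Fin n → ℝ := y ∘ Sum.inl with hx
      set t : ℝ := y (Sum.inr 0) with htdef
      have hcomm : x ⬝ᵥ m = m ⬝ᵥ x := dotProduct_comm _ _
      rw [hcomm]
      have key : ∀ s : ℝ, (x ⬝ᵥ M *ᵥ x) * s ^ 2 + (2 * (m ⬝ᵥ x)) * s + r ≥ 0 := by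
        intro s
        have := h (s • x)
        have e1 : (s • x) ⬝ᵥ M *ᵥ (s • x) = s ^ 2 * (x ⬝ᵥ M *ᵥ x) := by
          rw [smul_dotProduct, mulVec_smul, dotProduct_smul]
          ring_nf
        have e2 : m ⬝ᵥ (s • x) = s * (m ⬝ᵥ x) := by
          rw [dotProduct_smul]; simp [smul_eq_mul]
        rw [e1, e2] at this
        linarith [this]
      by_cases ht : t = 0
      · have := quad_coeff_nonneg _ _ _ key
        rw [ht]
        simpa using this
      · have hk := key t⁻¹
        have e : t ^ 2 * ((x ⬝ᵥ M *ᵥ x) * t⁻¹ ^ 2 + 2 * (m ⬝ᵥ x) * t⁻¹ + r)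
            = x ⬝ᵥ M *ᵥ x + t * (m ⬝ᵥ x) + t * (m ⬝ᵥ x) + t * t * r := by
          field_simp
          ring
        have h2 : 0 ≤ t ^ 2 * ((x ⬝ᵥ M *ᵥ x) * t⁻¹ ^ 2 + 2 * (m ⬝ᵥ x) * t⁻¹ + r) :=
          mul_nonneg (sq_nonneg t) hk
        rw [e] at h2
        linarith
  · intro h x
    have := (posSemidef_iff_dotProduct_mulVec.mp h).2 (Sum.elim x (fun _ => 1))
    rw [star_trivial, form_eval] at this
    simp only [Sum.elim_inr, Sum.elim_comp_inl, one_mul, mul_one] at this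
    have hcomm : x ⬝ᵥ m = m ⬝ᵥ x := dotProduct_comm _ _
    rw [hcomm] at this
    linarith [this]
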